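/- GeneralEnvelope: Let Γ be a p-graph (SPO + Envelope) and 𝐀, 𝐁, 𝐂, 𝐃 pairwise disjoint node sets each of which is a singleton or induces a subgraph of Γ that is a disjoint union of at least two weakly connected components. If every node of 𝐀 has an edge to every node of 𝐁, every node of 𝐂 to every node of 𝐃, and every node of 𝐂 to every node of 𝐁, then every node of 𝐂 has an edge to every node of 𝐀, or every node of 𝐀 to every node of 𝐃, or every node of 𝐃 to every node of 𝐁. -/

import Mathlib

/-- The subgraph of `Γ` induced by `S` is weakly connected. -/
def WeaklyConnectedOn {ι : Type*} (Γ : ι → ι → Prop) (S : Set ι) : Prop :=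
  ∀ x ∈ S, ∀ y ∈ S,
    Relation.ReflTransGen (fun a b => a ∈ S ∧ b ∈ S ∧ (Γ a b ∨ Γ b a)) x y

/-- `S` is a singleton, or is nonempty and its induced subgraph is a disjoint
union of at least two weakly connected components (i.e. not weakly connected). -/
def SingletonOrDisconnected {ι : Type*} (Γ : ι → ι → Prop) (S : Set ι) : Prop :=
  (∃ a, S = {a}) ∨ (S.Nonempty ∧ ¬ WeaklyConnectedOn Γ S)

section Aux

variable {ι : Type*} (Γ : ι → ι → Prop)

private lemma reach_symm {S : Set ι} :
    Symmetric (Relation.ReflTransGen (fun a b => a ∈ S ∧ b ∈ S ∧ (Γ a b ∨ Γ b a))) :=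
  fun x y h => (@Relation.ReflTransGen.stdSymm _ _ ⟨fun _ _ h => ⟨h.2.1, h.1, h.2.2.symm⟩⟩).symm x y h

/-- Given an element `z`, in a non-weakly-connected set `S` we can find an element
not weakly reachable from `z` inside `S`. -/
private lemma exists_unreachable {S : Set ι} (hS : ¬ WeaklyConnectedOn Γ S) (z : ι) :
    ∃ f ∈ S, ¬ Relation.ReflTransGen
      (fun a b => a ∈ S ∧ b ∈ S ∧ (Γ a b ∨ Γ b a)) f z := by
  unfold WeaklyConnectedOn at hS
  push_neg at hS
  obtain ⟨x, hx, y, hy, hxy⟩ := hS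
  by_cases hxz : Relation.ReflTransGen
      (fun a b => a ∈ S ∧ b ∈ S ∧ (Γ a b ∨ Γ b a)) x z
  · exact ⟨y, hy, fun h => hxy (hxz.trans (reach_symm Γ h))⟩
  · exact ⟨x, hx, hxz⟩

/-- Core lemma ("Lemma D"): for distinct nodes `a, b, c` outside a
singleton-or-disconnected set `D`, if `Γ a b`, `Γ c b` and `c` has an edge to all of `D`,
then `Γ c a`, or `a` has an edge to all of `D`, or all of `D` has an edge to `b`. -/
private lemma lemmaD
    (htr : ∀ a b c, Γ a b → Γ b c → Γ a c)
    (henv : ∀ a b c d : ι, a ≠ b → a ≠ c → a ≠ d → b ≠ c → b ≠ d → c ≠ d →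
      Γ a b → Γ c d → Γ c b → (Γ c a ∨ Γ a d ∨ Γ d b))
    {SD : Set ι} (hD : SingletonOrDisconnected Γ SD)
    {a b c : ι} (hab : a ≠ b) (hac : a ≠ c) (hbc : b ≠ c)
    (haD : a ∉ SD) (hbD : b ∉ SD) (hcD : c ∉ SD)
    (hΓab : Γ a b) (hΓcb : Γ c b) (hΓcd : ∀ d ∈ SD, Γ c d) :
    Γ c a ∨ (∀ d ∈ SD, Γ a d) ∨ (∀ d ∈ SD, Γ d b) := by
  by_contra h
  push_neg at h
  obtain ⟨hca, ⟨d₁, hd₁D, hd₁⟩, ⟨d₂, hd₂D, hd₂⟩⟩ := h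
  have neaD : ∀ d ∈ SD, a ≠ d := fun d hd he => haD (he ▸ hd)
  have nebD : ∀ d ∈ SD, b ≠ d := fun d hd he => hbD (he ▸ hd)
  have necD : ∀ d ∈ SD, c ≠ d := fun d hd he => hcD (he ▸ hd)
  have pointwise : ∀ d ∈ SD, Γ a d ∨ Γ d b := by
    intro d hd
    rcases henv a b c d hab hac (neaD d hd) hbc (nebD d hd) (necD d hd)
      hΓab (hΓcd d hd) hΓcb with h | h | h
    · exact absurd h hca
    · exact Or.inl h
    · exact Or.inr h
  have hd1b : Γ d₁ b := (pointwise d₁ hd₁D).resolve_left hd₁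
  have had2 : Γ a d₂ := (pointwise d₂ hd₂D).resolve_right hd₂
  have hne12 : d₁ ≠ d₂ := fun h => hd₁ (h ▸ had2)
  have h12 : Γ d₁ d₂ := by
    by_cases h21 : Γ d₂ d₁
    · exact absurd (htr a d₂ d₁ had2 h21) hd₁
    by_contra h12
    rcases henv d₁ b a d₂ (nebD d₁ hd₁D).symm (neaD d₁ hd₁D).symm hne12
      hab.symm (nebD d₂ hd₂D) (neaD d₂ hd₂D) hd1b had2 hΓab with h | h | h
    · exact hd₁ h
    · exact h12 h
    · exact hd₂ h
  -- D is not a singleton, hence disconnected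
  have hdisc : ¬ WeaklyConnectedOn Γ SD := by
    rcases hD with ⟨t, ht⟩ | ⟨_, h⟩
    · subst ht
      exact absurd (hd₁D.trans hd₂D.symm) hne12
    · exact h
  obtain ⟨f, hfD, hf⟩ := exists_unreachable Γ hdisc d₁
  have hreach12 : Relation.ReflTransGen
      (fun p q => p ∈ SD ∧ q ∈ SD ∧ (Γ p q ∨ Γ q p)) d₁ d₂ :=
    Relation.ReflTransGen.single ⟨hd₁D, hd₂D, Or.inl h12⟩
  have hf2 : ¬ Relation.ReflTransGen
      (fun p q => p ∈ SD ∧ q ∈ SD ∧ (Γ p q ∨ Γ q p)) f d₂ :=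
    fun h => hf (h.trans (reach_symm Γ hreach12))
  have hfne1 : f ≠ d₁ := fun h => hf (h ▸ Relation.ReflTransGen.refl)
  have hfne2 : f ≠ d₂ := fun h => hf2 (h ▸ Relation.ReflTransGen.refl)
  have noe1 : ¬ Γ f d₁ ∧ ¬ Γ d₁ f :=
    ⟨fun h => hf (Relation.ReflTransGen.single ⟨hfD, hd₁D, Or.inl h⟩),
     fun h => hf (Relation.ReflTransGen.single ⟨hfD, hd₁D, Or.inr h⟩)⟩
  have noe2 : ¬ Γ f d₂ ∧ ¬ Γ d₂ f :=
    ⟨fun h => hf2 (Relation.ReflTransGen.single ⟨hfD, hd₂D, Or.inl h⟩),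
     fun h => hf2 (Relation.ReflTransGen.single ⟨hfD, hd₂D, Or.inr h⟩)⟩
  have hfb : Γ f b := by
    rcases pointwise f hfD with haf | hfb
    · rcases henv d₁ b a f (nebD d₁ hd₁D).symm (neaD d₁ hd₁D).symm hfne1.symm
        hab.symm (nebD f hfD) (neaD f hfD) hd1b haf hΓab with h | h | h
      · exact absurd h hd₁
      · exact absurd h noe1.2
      · exact h
    · exact hfb
  have haf : Γ a f := by
    rcases henv f b a d₂ (nebD f hfD).symm (neaD f hfD).symm hfne2
      hab.symm (nebD d₂ hd₂D) (neaD d₂ hd₂D) hfb had2 hΓab with h | h | h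
    · exact h
    · exact absurd h noe2.1
    · exact absurd h hd₂
  rcases henv a f c d₁ (neaD f hfD) hac (neaD d₁ hd₁D) (necD f hfD).symm hfne1
    (necD d₁ hd₁D) haf (hΓcd d₁ hd₁D) (hΓcd f hfD) with h | h | h
  · exact hca h
  · exact hd₁ h
  · exact noe1.2 h

end Aux

/-- GeneralEnvelope.  For a p-graph `Γ` and pairwise disjoint node
sets `𝐀, 𝐁, 𝐂, 𝐃`, each a singleton or inducing a disconnected subgraph:
if `𝐀→𝐁`, `𝐂→𝐃` and `𝐂→𝐁` (all edges present), then `𝐂→𝐀` or `𝐀→𝐃` or `𝐃→𝐁`. -/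
theorem general_envelope {ι : Type*} [Fintype ι]
    (Γ : ι → ι → Prop)
    (hirr : ∀ a, ¬ Γ a a)
    (htr : ∀ a b c, Γ a b → Γ b c → Γ a c)
    (henv : ∀ a b c d : ι, a ≠ b → a ≠ c → a ≠ d → b ≠ c → b ≠ d → c ≠ d →
      Γ a b → Γ c d → Γ c b → (Γ c a ∨ Γ a d ∨ Γ d b))
    (SA SB SC SD : Set ι)
    (hAB : Disjoint SA SB) (hAC : Disjoint SA SC) (hAD : Disjoint SA SD)
    (hBC : Disjoint SB SC) (hBD : Disjoint SB SD) (hCD : Disjoint SC SD)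
    (hA : SingletonOrDisconnected Γ SA) (hB : SingletonOrDisconnected Γ SB)
    (hC : SingletonOrDisconnected Γ SC) (hD : SingletonOrDisconnected Γ SD)
    (hABedge : ∀ a ∈ SA, ∀ b ∈ SB, Γ a b)
    (hCDedge : ∀ c ∈ SC, ∀ d ∈ SD, Γ c d)
    (hCBedge : ∀ c ∈ SC, ∀ b ∈ SB, Γ c b) :
    (∀ c ∈ SC, ∀ a ∈ SA, Γ c a) ∨
    (∀ a ∈ SA, ∀ d ∈ SD, Γ a d) ∨
    (∀ d ∈ SD, ∀ b ∈ SB, Γ d b) := by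
  by_contra h
  push_neg at h
  obtain ⟨⟨c₀, hc₀, a₀, ha₀, hca₀⟩, ⟨a₁, ha₁, d₁, hd₁, had₁⟩, ⟨d₂, hd₂, b₂, hb₂, hdb₂⟩⟩ := h
  -- disjointness consequences
  have nAB : ∀ x ∈ SA, ∀ y ∈ SB, x ≠ y :=
    fun x hx y hy he => Set.disjoint_left.mp hAB hx (he ▸ hy)
  have nAC : ∀ x ∈ SA, ∀ y ∈ SC, x ≠ y :=
    fun x hx y hy he => Set.disjoint_left.mp hAC hx (he ▸ hy)
  have nAD : ∀ x ∈ SA, ∀ y ∈ SD, x ≠ y :=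
    fun x hx y hy he => Set.disjoint_left.mp hAD hx (he ▸ hy)
  have nBC : ∀ x ∈ SB, ∀ y ∈ SC, x ≠ y :=
    fun x hx y hy he => Set.disjoint_left.mp hBC hx (he ▸ hy)
  have nCD : ∀ x ∈ SC, ∀ y ∈ SD, x ≠ y :=
    fun x hx y hy he => Set.disjoint_left.mp hCD hx (he ▸ hy)
  -- every a ∈ A, c ∈ C: Γ c a or a dominates D
  have key : ∀ a ∈ SA, ∀ c ∈ SC, Γ c a ∨ (∀ d ∈ SD, Γ a d) := by
    intro a ha c hc
    rcases lemmaD Γ htr henv hD (nAB a ha b₂ hb₂) (nAC a ha c hc)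
      (nBC b₂ hb₂ c hc) (Set.disjoint_left.mp hAD ha)
      (Set.disjoint_left.mp hBD hb₂) (Set.disjoint_left.mp hCD hc)
      (hABedge a ha b₂ hb₂) (hCBedge c hc b₂ hb₂)
      (fun d hd => hCDedge c hc d hd) with h | h | h
    · exact Or.inl h
    · exact Or.inr h
    · exact absurd (h d₂ hd₂) hdb₂
  have hUa₀ : ∀ d ∈ SD, Γ a₀ d := (key a₀ ha₀ c₀ hc₀).resolve_left hca₀
  have hca₁ : ∀ c ∈ SC, Γ c a₁ :=
    fun c hc => (key a₁ ha₁ c hc).resolve_right (fun h => had₁ (h d₁ hd₁))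
  have ne01 : a₀ ≠ a₁ := fun h => had₁ (h ▸ hUa₀ d₁ hd₁)
  have h01 : Γ a₀ a₁ := by
    by_contra h01
    rcases henv a₀ d₁ c₀ a₁ (nAD a₀ ha₀ d₁ hd₁) (nAC a₀ ha₀ c₀ hc₀) ne01
      (nCD c₀ hc₀ d₁ hd₁).symm (nAD a₁ ha₁ d₁ hd₁).symm (nAC a₁ ha₁ c₀ hc₀).symm
      (hUa₀ d₁ hd₁) (hca₁ c₀ hc₀) (hCDedge c₀ hc₀ d₁ hd₁) with h | h | h
    · exact hca₀ h
    · exact h01 h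
    · exact had₁ h
  -- A is not a singleton, hence disconnected
  have hAdisc : ¬ WeaklyConnectedOn Γ SA := by
    rcases hA with ⟨t, ht⟩ | ⟨_, h⟩
    · subst ht
      exact absurd (ha₀.trans ha₁.symm) ne01
    · exact h
  obtain ⟨f, hfA, hf⟩ := exists_unreachable Γ hAdisc a₀
  have hr01 : Relation.ReflTransGen
      (fun p q => p ∈ SA ∧ q ∈ SA ∧ (Γ p q ∨ Γ q p)) a₀ a₁ :=
    Relation.ReflTransGen.single ⟨ha₀, ha₁, Or.inl h01⟩
  have hf1 : ¬ Relation.ReflTransGen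
      (fun p q => p ∈ SA ∧ q ∈ SA ∧ (Γ p q ∨ Γ q p)) f a₁ :=
    fun h => hf (h.trans (reach_symm Γ hr01))
  have hfne0 : f ≠ a₀ := fun h => hf (h ▸ Relation.ReflTransGen.refl)
  have hfne1 : f ≠ a₁ := fun h => hf1 (h ▸ Relation.ReflTransGen.refl)
  have noe0 : ¬ Γ f a₀ ∧ ¬ Γ a₀ f :=
    ⟨fun h => hf (Relation.ReflTransGen.single ⟨hfA, ha₀, Or.inl h⟩),
     fun h => hf (Relation.ReflTransGen.single ⟨hfA, ha₀, Or.inr h⟩)⟩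
  have noe1 : ¬ Γ f a₁ ∧ ¬ Γ a₁ f :=
    ⟨fun h => hf1 (Relation.ReflTransGen.single ⟨hfA, ha₁, Or.inl h⟩),
     fun h => hf1 (Relation.ReflTransGen.single ⟨hfA, ha₁, Or.inr h⟩)⟩
  have hc₀f : Γ c₀ f := by
    by_contra hc0f
    have hUf : ∀ d ∈ SD, Γ f d := (key f hfA c₀ hc₀).resolve_left hc0f
    rcases henv f d₁ c₀ a₁ (nAD f hfA d₁ hd₁) (nAC f hfA c₀ hc₀) hfne1
      (nCD c₀ hc₀ d₁ hd₁).symm (nAD a₁ ha₁ d₁ hd₁).symm (nAC a₁ ha₁ c₀ hc₀).symm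
      (hUf d₁ hd₁) (hca₁ c₀ hc₀) (hCDedge c₀ hc₀ d₁ hd₁) with h | h | h
    · exact hc0f h
    · exact noe1.1 h
    · exact had₁ h
  rcases henv a₀ a₁ c₀ f ne01 (nAC a₀ ha₀ c₀ hc₀) hfne0.symm
    (nAC a₁ ha₁ c₀ hc₀) hfne1.symm (nAC f hfA c₀ hc₀).symm
    h01 hc₀f (hca₁ c₀ hc₀) with h | h | h
  · exact hca₀ h
  · exact noe0.2 h
  · exact noe1.1 h
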